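/- arXiv:2201.11865 — 2 statements merged into one kernel-verified Lean document; each statement's English description precedes it below -/
import Mathlib

section
/- Let W, F be finite-dimensional real inner product spaces, let u : W → F be differentiable at w_c ∈ W with ‖Du(w_c)‖_op ≤ Λ₃, and let h : F → ℝ be twice continuously differentiable. Set z := u(w_c) and fix z̃ ∈ F, λ ∈ ℝ, C ≥ 0 such that for every point v on the segment [z, z̃] the operator norm of (Hess h(v) − λ·id) is at most C. Define the corrected client gradient g̃ := (Du(w_c))* (∇h(z̃) + λ·(z − z̃)), where (Du(w_c))* is the adjoint of the Fréchet derivative of u at w_c. Then the true gradient of h ∘ u at w_c equals (Du(w_c))* ∇h(z), and ‖g̃ − ∇(h ∘ u)(w_c)‖ ≤ C·Λ₃·‖z̃ − z‖. -/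
/-- Client-side version of bound (thm1_4) in the proof of Theorem 1: with
`z = u(w_c)`, the true gradient of `h ∘ u` at `w_c` is `(Du(w_c))* ∇h(z)`, and the
corrected client gradient `g̃ = (Du(w_c))* (∇h(z̃) + λ(z − z̃))` satisfies
`‖g̃ − ∇(h ∘ u)(w_c)‖ ≤ C · Λ₃ · ‖z̃ − z‖`, where `C` bounds `‖Hess h − λ·id‖`
along the segment `[z, z̃]` and `Λ₃` bounds `‖Du(w_c)‖`. -/
theorem corrected_client_gradient_error_bound
    {W F : Type*}
    [NormedAddCommGroup W] [InnerProductSpace ℝ W] [FiniteDimensional ℝ W]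
    [NormedAddCommGroup F] [InnerProductSpace ℝ F] [FiniteDimensional ℝ F]
    (u : W → F) (wc : W) (Du : W →L[ℝ] F) (hu : HasFDerivAt u Du wc)
    (Λ₃ : ℝ) (hΛ₃ : ‖Du‖ ≤ Λ₃)
    (h : F → ℝ) (hh : ContDiff ℝ 2 h)
    (z : F) (hz : z = u wc) (ztil : F) (lam C : ℝ) (hC : 0 ≤ C)
    (hHess : ∀ v ∈ segment ℝ z ztil,
      ‖fderiv ℝ (gradient h) v - lam • ContinuousLinearMap.id ℝ F‖ ≤ C)
    (gtil : W)
    (hgtil : gtil =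
      ContinuousLinearMap.adjoint Du (gradient h ztil + lam • (z - ztil))) :
    gradient (h ∘ u) wc = ContinuousLinearMap.adjoint Du (gradient h z)
      ∧ ‖gtil - gradient (h ∘ u) wc‖ ≤ C * Λ₃ * ‖ztil - z‖ := by
  subst hz
  set z := u wc with hz
  have hhd : Differentiable ℝ h := hh.differentiable (by norm_num)
  have hgz : HasGradientAt h (gradient h z) z := (hhd z).hasGradientAt
  -- chain rule
  have hgrad : HasGradientAt (h ∘ u) (ContinuousLinearMap.adjoint Du (gradient h z)) wc := by
    have hfd : HasFDerivAt h (InnerProductSpace.toDual ℝ F (gradient h z)) z :=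
      hgz.hasFDerivAt
    have hcomp := hfd.comp wc hu (g := h)
    rw [hasGradientAt_iff_hasFDerivAt]
    refine hcomp.congr_fderiv ?_
    ext w
    simp [ContinuousLinearMap.adjoint_inner_left, InnerProductSpace.toDual_apply_apply,
      real_inner_comm]
  have hmain : gradient (h ∘ u) wc = ContinuousLinearMap.adjoint Du (gradient h z) :=
    hgrad.gradient
  refine ⟨hmain, ?_⟩
  -- gradient h is differentiable
  have hgd : Differentiable ℝ (gradient h) := by
    have h1 : Differentiable ℝ (fderiv ℝ h) :=
      (hh.fderiv_right (m := 1) le_rfl).differentiable one_ne_zero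
    have : gradient h = fun x => (InnerProductSpace.toDual ℝ F).symm (fderiv ℝ h x) := rfl
    rw [this]
    exact (InnerProductSpace.toDual ℝ F).symm.toContinuousLinearEquiv.differentiable.comp h1
  set φ : F → F := fun v => gradient h v - lam • v with hφ
  have hφd : ∀ v ∈ segment ℝ z ztil,
      HasFDerivWithinAt φ (fderiv ℝ (gradient h) v - lam • ContinuousLinearMap.id ℝ F)
        (segment ℝ z ztil) v := fun v _ => by
    exact (((hgd v).hasFDerivAt.sub ((hasFDerivAt_id v).const_smul lam)).hasFDerivWithinAt)
  have hconv : Convex ℝ (segment ℝ z ztil) := convex_segment z ztil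
  have hzmem : z ∈ segment ℝ z ztil := left_mem_segment ℝ z ztil
  have hzt : ztil ∈ segment ℝ z ztil := right_mem_segment ℝ z ztil
  have hmvt := hconv.norm_image_sub_le_of_norm_hasFDerivWithin_le hφd hHess hzmem hzt
  -- hmvt : ‖φ ztil - φ z‖ ≤ C * ‖ztil - z‖
  have hkey : gtil - gradient (h ∘ u) wc = ContinuousLinearMap.adjoint Du (φ ztil - φ z) := by
    rw [hgtil, hmain, ← map_sub]
    congr 1
    simp only [hφ]
    module
  rw [hkey]
  calc ‖ContinuousLinearMap.adjoint Du (φ ztil - φ z)‖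
      ≤ ‖ContinuousLinearMap.adjoint Du‖ * ‖φ ztil - φ z‖ :=
        (ContinuousLinearMap.adjoint Du).le_opNorm _
    _ ≤ Λ₃ * (C * ‖ztil - z‖) := by
        have hΛ0 : (0:ℝ) ≤ Λ₃ := le_trans (norm_nonneg _) hΛ₃
        have h1 : ‖ContinuousLinearMap.adjoint Du‖ ≤ Λ₃ := by
          calc ‖ContinuousLinearMap.adjoint Du‖ = ‖Du‖ :=
                ContinuousLinearMap.adjoint.norm_map Du
            _ ≤ Λ₃ := hΛ₃
        have h2 : ‖φ ztil - φ z‖ ≤ C * ‖ztil - z‖ := hmvt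
        exact mul_le_mul h1 h2 (norm_nonneg _) hΛ0
    _ = C * Λ₃ * ‖ztil - z‖ := by ring
end

section
/- Let W_c, W_s, Z be finite-dimensional real inner product spaces, let u : W_c → Z be differentiable at w_c with ‖Du(w_c)‖_op ≤ Λ₃, and let h : W_s × Z → ℝ be twice continuously differentiable. Fix w_s ∈ W_s, set z := u(w_c), and let z̃ ∈ Z satisfy ‖z − z̃‖ ≤ κ. Suppose that for every v on the segment [z, z̃]: (i) the operator norm of the mixed second derivative ∂²h/∂ζ∂w_s at (w_s, v) is at most Λ₁; and (ii) the operator norm of (∂²h/∂ζ²(w_s, v) − λ·id) is at most |Λ₂ − λ|. Define the server-side perturbation δ_s := ∇_{w_s} h(w_s, z̃) − ∇_{w_s} h(w_s, z) and the client-side perturbation δ_c := (Du(w_c))*(∇_ζ h(w_s, z̃) + λ(z − z̃)) − (Du(w_c))* ∇_ζ h(w_s, z). Then ‖δ_c‖² + ‖δ_s‖² ≤ (Λ₁² + (Λ₂ − λ)²·Λ₃²)·κ². -/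
open ContinuousLinearMap InnerProductSpace in
/-- Combined perturbation bound in Theorem 1: with true activation `z = u(w_c)` and
quantized activation `z̃` at distance at most `κ`, if along the segment `[z, z̃]` the
mixed second derivative `∂²h/∂ζ∂w_s` has operator norm at most `Λ₁` and
`∂²h/∂ζ² − λ·id` has operator norm at most `|Λ₂ − λ|`, then the server-side
perturbation `δ_s` and the (λ-corrected) client-side perturbation `δ_c` satisfy
`‖δ_c‖² + ‖δ_s‖² ≤ (Λ₁² + (Λ₂ − λ)²Λ₃²)κ²`. -/
theorem fedlite_combined_perturbation_bound
    {Wc Ws Z : Type*}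
    [NormedAddCommGroup Wc] [InnerProductSpace ℝ Wc] [FiniteDimensional ℝ Wc]
    [NormedAddCommGroup Ws] [InnerProductSpace ℝ Ws] [FiniteDimensional ℝ Ws]
    [NormedAddCommGroup Z] [InnerProductSpace ℝ Z] [FiniteDimensional ℝ Z]
    (u : Wc → Z) (wc : Wc) (Du : Wc →L[ℝ] Z) (hu : HasFDerivAt u Du wc)
    (Λ₃ : ℝ) (hΛ₃ : ‖Du‖ ≤ Λ₃)
    (h : Ws × Z → ℝ) (hh : ContDiff ℝ 2 h)
    (ws : Ws) (z : Z) (hz : z = u wc) (ztil : Z) (κ : ℝ) (hκ : ‖z - ztil‖ ≤ κ)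
    (Λ₁ Λ₂ lam : ℝ)
    (hmixed : ∀ v ∈ segment ℝ z ztil,
      ‖fderiv ℝ (fun ζ => gradient (fun w' => h (w', ζ)) ws) v‖ ≤ Λ₁)
    (hHess : ∀ v ∈ segment ℝ z ztil,
      ‖fderiv ℝ (gradient (fun ζ => h (ws, ζ))) v
          - lam • ContinuousLinearMap.id ℝ Z‖ ≤ |Λ₂ - lam|)
    (δs : Ws)
    (hδs : δs = gradient (fun w' => h (w', ztil)) ws
                  - gradient (fun w' => h (w', z)) ws)
    (δc : Wc)
    (hδc : δc =
      ContinuousLinearMap.adjoint Du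
          (gradient (fun ζ => h (ws, ζ)) ztil + lam • (z - ztil))
        - ContinuousLinearMap.adjoint Du (gradient (fun ζ => h (ws, ζ)) z)) :
    ‖δc‖ ^ 2 + ‖δs‖ ^ 2 ≤ (Λ₁ ^ 2 + (Λ₂ - lam) ^ 2 * Λ₃ ^ 2) * κ ^ 2 := by
  have hdiff : Differentiable ℝ h := hh.differentiable (by norm_num)
  have hh1 : ContDiff ℝ 1 (fderiv ℝ h) := hh.fderiv_right (by norm_num)
  -- server-side gradient map
  set G : Z → Ws := fun ζ => (toDual ℝ Ws).symm
      ((fderiv ℝ h (ws, ζ)).comp (ContinuousLinearMap.inl ℝ Ws Z)) with hGdef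
  have hGeq : ∀ ζ, gradient (fun w' => h (w', ζ)) ws = G ζ := by
    intro ζ
    rw [gradient]
    congr 1
    exact ((hdiff (ws, ζ)).hasFDerivAt.comp ws (hasFDerivAt_prodMk_left ws ζ)).fderiv
  have hGc : ContDiff ℝ 1 G :=
    ((toDual ℝ Ws).symm.toContinuousLinearEquiv.contDiff).comp
      ((((compL ℝ Ws (Ws × Z) ℝ).flip (ContinuousLinearMap.inl ℝ Ws Z)).contDiff).comp
        (hh1.comp (contDiff_const.prodMk contDiff_id)))
  have hGfun : (fun ζ => gradient (fun w' => h (w', ζ)) ws) = G := funext hGeq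
  -- client-side gradient map
  set g : Z → Z := fun ζ => (toDual ℝ Z).symm
      ((fderiv ℝ h (ws, ζ)).comp (ContinuousLinearMap.inr ℝ Ws Z)) with hgdef
  have hgeq : ∀ ζ, gradient (fun ζ' => h (ws, ζ')) ζ = g ζ := by
    intro ζ
    rw [gradient]
    congr 1
    exact ((hdiff (ws, ζ)).hasFDerivAt.comp ζ (hasFDerivAt_prodMk_right ws ζ)).fderiv
  have hgc : ContDiff ℝ 1 g :=
    ((toDual ℝ Z).symm.toContinuousLinearEquiv.contDiff).comp
      ((((compL ℝ Z (Ws × Z) ℝ).flip (ContinuousLinearMap.inr ℝ Ws Z)).contDiff).comp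
        (hh1.comp (contDiff_const.prodMk contDiff_id)))
  have hgfun : gradient (fun ζ => h (ws, ζ)) = g := funext hgeq
  -- constants nonneg
  have hzmem := left_mem_segment ℝ z ztil
  have hZ1 : (0:ℝ) ≤ Λ₁ := le_trans (norm_nonneg _) (hmixed z hzmem)
  have hκ0 : (0:ℝ) ≤ κ := le_trans (norm_nonneg _) hκ
  have hΛ₃0 : (0:ℝ) ≤ Λ₃ := le_trans (norm_nonneg _) hΛ₃
  have hnorm : ‖ztil - z‖ ≤ κ := by rwa [norm_sub_rev]
  -- server bound via MVT
  have hGbound : ‖G ztil - G z‖ ≤ Λ₁ * κ := by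
    have := (convex_segment z ztil).norm_image_sub_le_of_norm_fderiv_le
      (f := G) (fun x _ => (hGc.differentiable one_ne_zero x))
      (fun x hx => by rw [← hGfun]; exact hmixed x hx)
      hzmem (right_mem_segment ℝ z ztil)
    calc ‖G ztil - G z‖ ≤ Λ₁ * ‖ztil - z‖ := this
      _ ≤ Λ₁ * κ := by exact mul_le_mul_of_nonneg_left hnorm hZ1
  have hδs' : ‖δs‖ ≤ Λ₁ * κ := by
    rw [hδs, hGeq, hGeq]; exact hGbound
  -- client bound
  set φ : Z → Z := fun v => g v - lam • v with hφdef
  have hφd : ∀ v : Z, HasFDerivAt φ (fderiv ℝ g v - lam • ContinuousLinearMap.id ℝ Z) v := by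
    intro v
    exact ((hgc.differentiable one_ne_zero v).hasFDerivAt).sub
      ((hasFDerivAt_id v).const_smul lam)
  have hφbound : ‖φ ztil - φ z‖ ≤ |Λ₂ - lam| * κ := by
    have := (convex_segment z ztil).norm_image_sub_le_of_norm_fderiv_le
      (f := φ) (fun x _ => (hφd x).differentiableAt)
      (fun x hx => by
        rw [(hφd x).fderiv, ← hgfun]
        exact hHess x hx)
      hzmem (right_mem_segment ℝ z ztil)
    calc ‖φ ztil - φ z‖ ≤ |Λ₂ - lam| * ‖ztil - z‖ := this
      _ ≤ |Λ₂ - lam| * κ := mul_le_mul_of_nonneg_left hnorm (abs_nonneg _)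
  have hδc' : ‖δc‖ ≤ Λ₃ * (|Λ₂ - lam| * κ) := by
    have harg : gradient (fun ζ => h (ws, ζ)) ztil + lam • (z - ztil)
        - gradient (fun ζ => h (ws, ζ)) z = φ ztil - φ z := by
      rw [hgeq, hgeq, hφdef]
      simp only [smul_sub]
      abel
    have : δc = ContinuousLinearMap.adjoint Du (φ ztil - φ z) := by
      rw [hδc, ← map_sub, harg]
    rw [this]
    calc ‖ContinuousLinearMap.adjoint Du (φ ztil - φ z)‖
        ≤ ‖ContinuousLinearMap.adjoint Du‖ * ‖φ ztil - φ z‖ := le_opNorm _ _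
      _ ≤ Λ₃ * (|Λ₂ - lam| * κ) := by
          rw [show ‖ContinuousLinearMap.adjoint Du‖ = ‖Du‖ from
            ContinuousLinearMap.adjoint.norm_map Du]
          exact mul_le_mul hΛ₃ hφbound (norm_nonneg _) hΛ₃0
  -- combine
  have h1 : ‖δc‖ ^ 2 ≤ (Λ₃ * (|Λ₂ - lam| * κ)) ^ 2 :=
    pow_le_pow_left₀ (norm_nonneg _) hδc' 2
  have h2 : ‖δs‖ ^ 2 ≤ (Λ₁ * κ) ^ 2 := pow_le_pow_left₀ (norm_nonneg _) hδs' 2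
  have e1 : (Λ₃ * (|Λ₂ - lam| * κ)) ^ 2 = (Λ₂ - lam) ^ 2 * Λ₃ ^ 2 * κ ^ 2 := by
    rw [mul_pow, mul_pow, sq_abs]; ring
  have e2 : (Λ₁ * κ) ^ 2 = Λ₁ ^ 2 * κ ^ 2 := by rw [mul_pow]
  rw [e1] at h1
  rw [e2] at h2
  linarith
end
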